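/- For positive integers n, r and q ≥ 1, the number of compositions of n into r positive parts in which at most m parts exceed q equals ∑_{j=0}^{min(r, ⌊(n-r)/q⌋)} (-1)^{m+j} * C(j - 1, m) * C(r, j) * C(n - q*j - 1, r - 1), where C(-1, m) is interpreted as the j = 0 term contributing C(n-1, r-1) when m ≥ 0 (i.e., C(j-1,m) with j=0 taken as (-1)^m). -/

import Mathlib

/-- The compositions of `n` into `r` positive parts, as a `Finset` of tuples. -/
def compositions (n r : ℕ) : Finset (Fin r → ℕ) :=
  (Fintype.piFinset fun _ => Finset.range (n + 1)).filter
    fun c => (∀ i, 0 < c i) ∧ ∑ i, c i = n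

/-- Integer-valued binomial coefficient with the convention `C(a, b) = 0` when `b < 0`
or `b > a`. -/
def chZ (a b : ℤ) : ℤ := if 0 ≤ b ∧ b ≤ a then (a.toNat.choose b.toNat : ℤ) else 0

open Finset

lemma mem_compositions {N r : ℕ} {c : Fin r → ℕ} :
    c ∈ compositions N r ↔ (∀ i, 0 < c i) ∧ ∑ i, c i = N := by
  unfold compositions
  rw [Finset.mem_filter, and_iff_right_iff_imp]
  rintro ⟨hpos, hsum⟩
  rw [Fintype.mem_piFinset]
  intro i
  rw [Finset.mem_range, Nat.lt_succ_iff, ← hsum]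
  exact Finset.single_le_sum (fun j _ => Nat.zero_le _) (Finset.mem_univ i)

lemma sum_range_choose' (K k : ℕ) : ∑ t ∈ range K, t.choose k = K.choose (k + 1) := by
  induction K with
  | zero => simp
  | succ K ih => rw [Finset.sum_range_succ, ih, Nat.choose_succ_succ' K k]; ring

lemma card_compositions (r : ℕ) (hr : 1 ≤ r) : ∀ N,
    (compositions N r).card = if N = 0 then 0 else (N - 1).choose (r - 1) := by
  induction r with
  | zero => omega
  | succ r ih =>
    intro N
    rcases Nat.eq_zero_or_pos r with hr0 | hr1
    · subst hr0
      rcases Nat.eq_zero_or_pos N with h | h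
      · subst h
        rw [if_pos rfl, Finset.card_eq_zero]
        ext c
        simp only [mem_compositions, Finset.notMem_empty, iff_false, not_and]
        intro hp hs
        have h0 := Finset.single_le_sum (fun j _ => Nat.zero_le (c j)) (Finset.mem_univ 0)
        have := hp 0
        omega
      · rw [if_neg (by omega)]
        have hs : compositions N 1 = {fun _ => N} := by
          ext c
          rw [mem_compositions, Finset.mem_singleton]
          constructor
          · rintro ⟨hp, hs⟩
            funext i
            have hi : i = 0 := Subsingleton.elim _ _
            subst hi
            simpa using hs
          · rintro rfl
            exact ⟨fun _ => h, by simp⟩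
        rw [hs, Finset.card_singleton]
        simp
    · have key : (compositions N (r + 1)).card
          = ((Finset.Icc 1 N).sigma fun a => compositions (N - a) r).card := by
        refine Finset.card_bij' (fun c _ => ⟨c 0, Fin.tail c⟩)
          (fun p _ => Fin.cons p.1 p.2) ?_ ?_ ?_ ?_
        · intro c hc
          rw [mem_compositions] at hc
          obtain ⟨hp, hsum⟩ := hc
          have hle : c 0 ≤ N := hsum ▸
            Finset.single_le_sum (fun j _ => Nat.zero_le (c j)) (Finset.mem_univ 0)
          rw [Finset.mem_sigma, Finset.mem_Icc]
          refine ⟨⟨hp 0, hle⟩, ?_⟩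
          rw [mem_compositions]
          refine ⟨fun i => hp i.succ, ?_⟩
          have := Fin.sum_univ_succ c
          simp only [Fin.tail]
          omega
        · rintro ⟨a, d⟩ hp
          rw [Finset.mem_sigma, Finset.mem_Icc, mem_compositions] at hp
          obtain ⟨⟨ha1, haN⟩, hd, hdsum⟩ := hp
          dsimp only at ha1 haN hd hdsum ⊢
          rw [mem_compositions]
          constructor
          · intro i
            refine Fin.cases ?_ ?_ i
            · simpa using Nat.lt_of_lt_of_le Nat.zero_lt_one ha1
            · intro j; simpa using hd j
          · rw [Fin.sum_univ_succ]
            simp only [Fin.cons_zero, Fin.cons_succ]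
            omega
        · intro c _; exact Fin.cons_self_tail c
        · rintro ⟨a, d⟩ _
          simp [Fin.tail_cons]
      rw [key, Finset.card_sigma]
      rcases Nat.eq_zero_or_pos N with h | h
      · subst h; simp
      · rw [if_neg (by omega)]
        have step1 : ∑ a ∈ Finset.Icc 1 N, (compositions (N - a) r).card
            = ∑ a ∈ Finset.Icc 1 N, (if N - a = 0 then 0 else (N - a - 1).choose (r - 1)) :=
          Finset.sum_congr rfl fun a _ => ih hr1 (N - a)
        rw [step1]
        have step2 : ∑ a ∈ Finset.Icc 1 N, (if N - a = 0 then 0 else (N - a - 1).choose (r - 1))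
            = ∑ M ∈ Finset.range N, (if M = 0 then 0 else (M - 1).choose (r - 1)) := by
          apply Finset.sum_nbij' (fun a => N - a) (fun M => N - M)
          · intro a ha; rw [Finset.mem_Icc] at ha; rw [Finset.mem_range]; omega
          · intro M hM; rw [Finset.mem_range] at hM; rw [Finset.mem_Icc]; omega
          · intro a ha; rw [Finset.mem_Icc] at ha; omega
          · intro M hM; rw [Finset.mem_range] at hM; omega
          · intro a _; rfl
        rw [step2]
        obtain ⟨K, rfl⟩ : ∃ K, N = K + 1 := ⟨N - 1, by omega⟩
        rw [Finset.sum_range_succ']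
        have hterm : ∀ i : ℕ, (if i + 1 = 0 then 0 else (i + 1 - 1).choose (r - 1))
            = i.choose (r - 1) := fun i => by simp
        simp only [hterm]
        rw [sum_range_choose']
        simp only [Nat.add_sub_cancel]
        have : r - 1 + 1 = r := by omega
        rw [this]
        simp

lemma card_filter_gt (n r q : ℕ) (hr : 1 ≤ r) (T : Finset (Fin r)) :
    ((compositions n r).filter fun c => ∀ i ∈ T, q < c i).card
      = (compositions (n - q * T.card) r).card := by
  have hsum_ind : ∑ i : Fin r, (if i ∈ T then q else 0) = q * T.card := by
    rw [Finset.sum_ite_mem, Finset.univ_inter, Finset.sum_const, smul_eq_mul, mul_comm]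
  rcases le_or_gt (q * T.card) n with hle | hlt
  · refine Finset.card_bij' (fun c _ => fun i => c i - if i ∈ T then q else 0)
      (fun d _ => fun i => d i + if i ∈ T then q else 0) ?_ ?_ ?_ ?_
    · intro c hc
      rw [Finset.mem_filter, mem_compositions] at hc
      obtain ⟨⟨hp, hsum⟩, hT⟩ := hc
      have hle' : ∀ i, (if i ∈ T then q else 0) ≤ c i := by
        intro i
        split
        · exact le_of_lt (hT i (by assumption))
        · exact Nat.zero_le _
      rw [mem_compositions]
      constructor
      · intro i
        have := hle' i
        by_cases hi : i ∈ T
        · have := hT i hi; simp only [hi, if_pos]; omega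
        · simp only [hi, if_neg, not_false_iff]; exact hp i
      · rw [Finset.sum_tsub_distrib _ (fun i _ => hle' i), hsum, hsum_ind]
    · intro d hd
      rw [mem_compositions] at hd
      obtain ⟨hp, hsum⟩ := hd
      rw [Finset.mem_filter, mem_compositions]
      refine ⟨⟨fun i => Nat.lt_of_lt_of_le (hp i) (Nat.le_add_right _ _), ?_⟩, ?_⟩
      · rw [Finset.sum_add_distrib, hsum, hsum_ind]
        omega
      · intro i hi
        have := hp i
        simp only [hi, if_pos]
        omega
    · intro c hc
      rw [Finset.mem_filter] at hc
      funext i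
      dsimp only
      by_cases hi : i ∈ T
      · have := hc.2 i hi
        simp only [hi, if_pos]
        omega
      · simp [hi]
    · intro d _
      funext i
      dsimp only
      by_cases hi : i ∈ T <;> simp [hi]
  · have hT0 : n - q * T.card = 0 := by omega
    rw [hT0, card_compositions r hr 0, if_pos rfl, Finset.card_eq_zero,
      Finset.filter_eq_empty_iff]
    intro c hc
    rw [mem_compositions] at hc
    obtain ⟨hp, hsum⟩ := hc
    intro hT
    have h1 : ∑ i ∈ T, c i ≤ ∑ i : Fin r, c i :=
      Finset.sum_le_sum_of_subset (Finset.subset_univ T)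
    have h2 : T.card • (q + 1) ≤ ∑ i ∈ T, c i :=
      Finset.card_nsmul_le_sum T c (q + 1) (fun i hi => hT i hi)
    rw [smul_eq_mul] at h2
    nlinarith [hsum, h1, h2, hlt]

lemma card_comp_eq_chZ (n r j q : ℕ) (hr : 1 ≤ r) :
    ((compositions (n - q * j) r).card : ℤ) = chZ ((n : ℤ) - q * j - 1) ((r : ℤ) - 1) := by
  rw [card_compositions r hr]
  unfold chZ
  rcases le_or_gt (q * j + r) n with hle | hlt
  · rw [if_neg (show ¬(n - q * j = 0) by omega),
      if_pos (show (0:ℤ) ≤ (r:ℤ) - 1 ∧ (r:ℤ) - 1 ≤ (n:ℤ) - q * j - 1 by omega)]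
    have h1 : ((n : ℤ) - q * j - 1).toNat = n - q * j - 1 := by omega
    have h2 : ((r : ℤ) - 1).toNat = r - 1 := by omega
    rw [h1, h2]
  · rw [if_neg (show ¬((0:ℤ) ≤ (r:ℤ) - 1 ∧ (r:ℤ) - 1 ≤ (n:ℤ) - q * j - 1) by omega)]
    have h0 : (if n - q * j = 0 then 0 else (n - q * j - 1).choose (r - 1)) = 0 := by
      split
      · rfl
      · exact Nat.choose_eq_zero_of_lt (by omega)
    rw [h0]
    simp

lemma orth (k m : ℕ) :
    ∑ i ∈ range (k + 1), (-1 : ℤ) ^ i * (k.choose i : ℤ) * (i.choose m : ℤ)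
      = if k = m then (-1 : ℤ) ^ m else 0 := by
  rcases lt_or_ge k m with hkm | hmk
  · rw [if_neg (by omega)]
    apply Finset.sum_eq_zero
    intro i hi
    rw [Finset.mem_range] at hi
    rw [Nat.choose_eq_zero_of_lt (show i < m by omega)]
    simp
  · have hsub : ∑ i ∈ range (k + 1), (-1 : ℤ) ^ i * (k.choose i : ℤ) * (i.choose m : ℤ)
        = ∑ i ∈ Finset.Ico m (k + 1), (-1 : ℤ) ^ i * (k.choose i : ℤ) * (i.choose m : ℤ) := by
      rw [Finset.range_eq_Ico]
      refine (Finset.sum_subset (Finset.Ico_subset_Ico (Nat.zero_le m) le_rfl) ?_).symm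
      intro i hi hni
      simp only [Finset.mem_Ico, not_and, not_lt] at hi hni
      rw [Nat.choose_eq_zero_of_lt (show i < m by omega)]
      simp
    rw [hsub, Finset.sum_Ico_eq_sum_range]
    have hlen : k + 1 - m = (k - m) + 1 := by omega
    rw [hlen]
    have hterm : ∀ l ∈ range (k - m + 1),
        (-1 : ℤ) ^ (m + l) * (k.choose (m + l) : ℤ) * ((m + l).choose m : ℤ)
          = (-1 : ℤ) ^ m * (k.choose m : ℤ) * ((-1 : ℤ) ^ l * ((k - m).choose l : ℤ)) := by
      intro l hl
      rw [Finset.mem_range] at hl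
      have hkey : k.choose (m + l) * (m + l).choose m = k.choose m * (k - m).choose l := by
        have := Nat.choose_mul (n := k) (show m ≤ m + l by omega)
        simpa using this
      have hc : (k.choose (m + l) : ℤ) * ((m + l).choose m : ℤ)
          = (k.choose m : ℤ) * ((k - m).choose l : ℤ) := by exact_mod_cast hkey
      rw [pow_add]
      linear_combination ((-1 : ℤ) ^ m * (-1 : ℤ) ^ l) * hc
    rw [Finset.sum_congr rfl hterm, ← Finset.mul_sum, Int.alternating_sum_range_choose]
    rcases eq_or_ne k m with rfl | hne
    · simp
    · rw [if_neg (by omega), if_neg hne]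
      simp

def coeffZ (m j : ℕ) : ℤ :=
  (-1 : ℤ) ^ (m + j) * (if j = 0 then (-1 : ℤ) ^ m else (((j - 1).choose m : ℕ) : ℤ))

lemma sumF (m : ℕ) : ∀ k : ℕ, ∑ j ∈ range (k + 1), (k.choose j : ℤ) * coeffZ m j
    = if k ≤ m then 1 else 0 := by
  intro k
  induction k with
  | zero =>
    rw [if_pos (Nat.zero_le m), Finset.sum_range_one, Nat.choose_self, Nat.cast_one, one_mul]
    unfold coeffZ
    rw [if_pos rfl, add_zero, ← pow_add]
    exact Even.neg_one_pow ⟨m, rfl⟩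
  | succ k ih =>
    have hA : ∑ j ∈ range (k + 1), (k.choose j : ℤ) * coeffZ m (j + 1)
        = if k = m then -1 else 0 := by
      have hc : ∀ j ∈ range (k + 1), (k.choose j : ℤ) * coeffZ m (j + 1)
          = (-1 : ℤ) ^ (m + 1) * ((-1 : ℤ) ^ j * (k.choose j : ℤ) * (j.choose m : ℤ)) := by
        intro j _
        simp only [coeffZ, Nat.succ_ne_zero, if_false, Nat.add_sub_cancel]
        rw [show m + (j + 1) = (m + 1) + j by omega, pow_add]
        ring
      rw [Finset.sum_congr rfl hc, ← Finset.mul_sum, orth]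
      split
      · rw [← pow_add]
        have : Odd (m + 1 + m) := ⟨m, by omega⟩
        exact this.neg_one_pow
      · rw [mul_zero]
    rw [Finset.sum_range_succ']
    have hsplit : ∀ j ∈ range (k + 1), (((k + 1).choose (j + 1) : ℕ) : ℤ) * coeffZ m (j + 1)
        = (k.choose j : ℤ) * coeffZ m (j + 1) + (k.choose (j + 1) : ℤ) * coeffZ m (j + 1) := by
      intro j _
      rw [Nat.choose_succ_succ]
      push_cast
      ring
    rw [Finset.sum_congr rfl hsplit, Finset.sum_add_distrib, add_assoc, hA]
    have hB : (∑ j ∈ range (k + 1), (k.choose (j + 1) : ℤ) * coeffZ m (j + 1))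
        + (((k + 1).choose 0 : ℕ) : ℤ) * coeffZ m 0 = if k ≤ m then 1 else 0 := by
      rw [← ih, Finset.sum_range_succ' (fun j => (k.choose j : ℤ) * coeffZ m j) k,
        Finset.sum_range_succ, Nat.choose_succ_self]
      simp
    rw [hB]
    split_ifs <;> omega

/-- For positive integers `n, r` and `q ≥ 1`, the number of compositions of `n` into `r`
positive parts in which at most `m` parts exceed `q` equals
`∑_{j=0}^{min(r, ⌊(n-r)/q⌋)} (-1)^{m+j} * C(j - 1, m) * C(r, j) * C(n - q*j - 1, r - 1)`,
where the `j = 0` term is interpreted via the convention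
`(-1)^j * C(j-1, m) |_{j=0} = (-1)^m`, i.e. the `j = 0` term contributes `C(n-1, r-1)`. -/
theorem stmt_6 (n r q m : ℕ) (hn : 1 ≤ n) (hr : 1 ≤ r) (hq : 1 ≤ q) :
    (((compositions n r).filter
          fun c => (Finset.univ.filter fun i => q < c i).card ≤ m).card : ℤ) =
      ∑ j ∈ Finset.range (min r ((n - r) / q) + 1),
        (-1 : ℤ) ^ (m + j) *
          (if j = 0 then (-1 : ℤ) ^ m else (((j - 1).choose m : ℕ) : ℤ)) *
          (r.choose j : ℤ) * chZ ((n : ℤ) - q * j - 1) ((r : ℤ) - 1) := by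
  classical
  have hterm_eq : ∀ j : ℕ,
      (-1 : ℤ) ^ (m + j) *
          (if j = 0 then (-1 : ℤ) ^ m else (((j - 1).choose m : ℕ) : ℤ)) *
          (r.choose j : ℤ) * chZ ((n : ℤ) - q * j - 1) ((r : ℤ) - 1)
        = coeffZ m j * (r.choose j : ℤ) * ((compositions (n - q * j) r).card : ℤ) := by
    intro j
    rw [← card_comp_eq_chZ n r j q hr]
    rfl
  simp only [hterm_eq]
  have hext : ∑ j ∈ Finset.range (min r ((n - r) / q) + 1),
        coeffZ m j * (r.choose j : ℤ) * ((compositions (n - q * j) r).card : ℤ)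
      = ∑ j ∈ Finset.range (r + 1),
        coeffZ m j * (r.choose j : ℤ) * ((compositions (n - q * j) r).card : ℤ) := by
    apply Finset.sum_subset
    · exact Finset.range_subset_range.mpr (by omega)
    · intro j hj hnj
      rw [Finset.mem_range] at hj hnj
      have hX : (n - r) / q < j := by omega
      have hdm := Nat.div_add_mod (n - r) q
      have hmod := Nat.mod_lt (n - r) (show 0 < q by omega)
      have hqj : n - r < q * j := by
        have h1 : q * ((n - r) / q + 1) = q * ((n - r) / q) + q := by ring
        calc n - r < q * ((n - r) / q + 1) := by omega
          _ ≤ q * j := Nat.mul_le_mul_left q hX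
      have hcard : (compositions (n - q * j) r).card = 0 := by
        rw [card_compositions r hr]
        split_ifs with h
        · rfl
        · exact Nat.choose_eq_zero_of_lt (by omega)
      rw [hcard]
      simp
  rw [hext]
  have hstep2 : ∀ j ∈ Finset.range (r + 1),
      coeffZ m j * (r.choose j : ℤ) * ((compositions (n - q * j) r).card : ℤ)
        = ∑ T ∈ Finset.powersetCard j (Finset.univ : Finset (Fin r)),
            coeffZ m T.card *
              (((compositions n r).filter fun c => ∀ i ∈ T, q < c i).card : ℤ) := by
    intro j _
    have hTs : ∀ T ∈ Finset.powersetCard j (Finset.univ : Finset (Fin r)),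
        coeffZ m T.card *
            (((compositions n r).filter fun c => ∀ i ∈ T, q < c i).card : ℤ)
          = coeffZ m j * ((compositions (n - q * j) r).card : ℤ) := by
      intro T hT
      have hcT : T.card = j := Finset.mem_powersetCard_univ.mp hT
      rw [card_filter_gt n r q hr T, hcT]
    rw [Finset.sum_congr rfl hTs, Finset.sum_const, Finset.card_powersetCard,
      Finset.card_univ, Fintype.card_fin, nsmul_eq_mul]
    ring
  rw [Finset.sum_congr rfl hstep2]
  have hpow : ∑ j ∈ Finset.range (r + 1),
        ∑ T ∈ Finset.powersetCard j (Finset.univ : Finset (Fin r)),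
          coeffZ m T.card *
            (((compositions n r).filter fun c => ∀ i ∈ T, q < c i).card : ℤ)
      = ∑ T ∈ (Finset.univ : Finset (Fin r)).powerset,
          coeffZ m T.card *
            (((compositions n r).filter fun c => ∀ i ∈ T, q < c i).card : ℤ) := by
    rw [Finset.powerset_card_disjiUnion]
    refine Eq.trans ?_ (Finset.sum_disjiUnion _ _ _).symm
    rw [Finset.card_univ,
      Fintype.card_fin]
  rw [hpow]
  have hfil : ∀ T : Finset (Fin r),
      (((compositions n r).filter fun c => ∀ i ∈ T, q < c i).card : ℤ)
        = ∑ c ∈ compositions n r, (if ∀ i ∈ T, q < c i then (1 : ℤ) else 0) := by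
    intro T
    rw [Finset.card_filter]
    push_cast
    rfl
  simp only [hfil, Finset.mul_sum]
  rw [Finset.sum_comm]
  have hinner : ∀ c ∈ compositions n r,
      ∑ T ∈ (Finset.univ : Finset (Fin r)).powerset,
          coeffZ m T.card * (if ∀ i ∈ T, q < c i then (1 : ℤ) else 0)
        = if (Finset.univ.filter fun i => q < c i).card ≤ m then 1 else 0 := by
    intro c _
    set E : Finset (Fin r) := Finset.univ.filter fun i => q < c i with hE
    have hcond : ∀ T : Finset (Fin r), (∀ i ∈ T, q < c i) ↔ T ⊆ E := by
      intro T
      constructor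
      · intro h i hi
        rw [hE, Finset.mem_filter]
        exact ⟨Finset.mem_univ i, h i hi⟩
      · intro h i hi
        have := h hi
        rw [hE, Finset.mem_filter] at this
        exact this.2
    have h1 : ∀ T ∈ (Finset.univ : Finset (Fin r)).powerset,
        coeffZ m T.card * (if ∀ i ∈ T, q < c i then (1 : ℤ) else 0)
          = if T ∈ E.powerset then coeffZ m T.card else 0 := by
      intro T _
      simp only [Finset.mem_powerset]
      by_cases h : T ⊆ E
      · rw [if_pos h, if_pos ((hcond T).mpr h), mul_one]
      · rw [if_neg h, if_neg (fun hc => h ((hcond T).mp hc)), mul_zero]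
    rw [Finset.sum_congr rfl h1, Finset.sum_ite_mem,
      Finset.inter_eq_right.mpr (Finset.powerset_mono.mpr (Finset.subset_univ E)),
      Finset.sum_powerset_apply_card]
    have h2 : ∀ j ∈ Finset.range (E.card + 1),
        E.card.choose j • coeffZ m j = (E.card.choose j : ℤ) * coeffZ m j := by
      intro j _
      rw [nsmul_eq_mul]
    rw [Finset.sum_congr rfl h2, sumF m E.card]
  rw [Finset.sum_congr rfl hinner, ← Finset.sum_filter, Finset.sum_const, nsmul_eq_mul,
    mul_one]
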